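/- arXiv:2104.11161 — 5 statements merged into one kernel-verified Lean document; each statement's English description precedes it below -/
import Mathlib

section
/- If f : ℝ≥0 → ℝ is square integrable (f ∈ L²(ℝ≥0, ℝ)), then for almost every x ≥ 0, the sequence f(n·x) converges to 0 as n → ∞. -/
open MeasureTheory Filter Set
open scoped ENNReal NNReal

lemma cov (F : ℝ → ℝ≥0∞) (hF : Measurable F) {c : ℝ} (hc : 0 < c) :
    ∫⁻ x, F (c * x) = ENNReal.ofReal c⁻¹ * ∫⁻ y, F y := by
  rw [← lintegral_map hF (measurable_const_mul c), Real.map_volume_mul_left hc.ne',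
    lintegral_smul_measure, smul_eq_mul, abs_of_pos (inv_pos.2 hc)]

lemma pointwise_bound (F : ℝ → ℝ≥0∞) {a : ℝ} (ha : 0 < a) (y : ℝ) :
    ∑' n : ℕ, ENNReal.ofReal ((n + 1 : ℝ))⁻¹ *
      (Set.Ioo ((n + 1) * a) ((n + 1) * (2 * a))).indicator F y
      ≤ 2 * (Set.Ioi (0:ℝ)).indicator F y := by
  rcases le_or_gt y 0 with hy | hy
  · have h0 : ∀ n : ℕ, ENNReal.ofReal ((n + 1 : ℝ))⁻¹ *
        (Set.Ioo ((n + 1) * a) ((n + 1) * (2 * a))).indicator F y = 0 := by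
      intro n
      have : y ∉ Set.Ioo ((n + 1 : ℝ) * a) ((n + 1) * (2 * a)) := by
        intro h
        have : (0:ℝ) < (n + 1) * a := by positivity
        linarith [h.1]
      rw [Set.indicator_of_notMem this, mul_zero]
    simp [h0]
  · rw [Set.indicator_of_mem (Set.mem_Ioi.mpr hy)]
    have hzero : ∀ n : ℕ, n ∉ Finset.range ⌊y / a⌋₊ →
        ENNReal.ofReal ((n + 1 : ℝ))⁻¹ *
          (Set.Ioo ((n + 1) * a) ((n + 1) * (2 * a))).indicator F y = 0 := by
      intro n hn
      have hn' : ⌊y / a⌋₊ ≤ n := by simpa using hn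
      have : y ∉ Set.Ioo ((n + 1 : ℝ) * a) ((n + 1) * (2 * a)) := by
        intro h
        have h1 : ((n : ℝ) + 1) < y / a := by
          rw [lt_div_iff₀ ha]; linarith [h.1]
        have h2 : (n + 1 : ℕ) ≤ ⌊y / a⌋₊ := Nat.le_floor (by push_cast; linarith)
        omega
      rw [Set.indicator_of_notMem this, mul_zero]
    rw [tsum_eq_sum hzero]
    have hterm : ∀ n ∈ Finset.range ⌊y / a⌋₊,
        ENNReal.ofReal ((n + 1 : ℝ))⁻¹ *
          (Set.Ioo ((n + 1) * a) ((n + 1) * (2 * a))).indicator F y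
          ≤ ENNReal.ofReal (2 * a / y) * F y := by
      intro n _
      by_cases hmem : y ∈ Set.Ioo ((n + 1 : ℝ) * a) ((n + 1) * (2 * a))
      · rw [Set.indicator_of_mem hmem]
        refine mul_le_mul_left (ENNReal.ofReal_le_ofReal ?_) _
        rw [le_div_iff₀ hy, inv_mul_le_iff₀ (by positivity)]
        linarith [hmem.2]
      · rw [Set.indicator_of_notMem hmem, mul_zero]; exact zero_le
    calc ∑ n ∈ Finset.range ⌊y / a⌋₊, ENNReal.ofReal ((n + 1 : ℝ))⁻¹ *
          (Set.Ioo ((n + 1) * a) ((n + 1) * (2 * a))).indicator F y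
        ≤ ∑ _n ∈ Finset.range ⌊y / a⌋₊, ENNReal.ofReal (2 * a / y) * F y :=
          Finset.sum_le_sum hterm
      _ = (⌊y / a⌋₊ : ℝ≥0∞) * (ENNReal.ofReal (2 * a / y) * F y) := by
          rw [Finset.sum_const, nsmul_eq_mul, Finset.card_range]
      _ ≤ ENNReal.ofReal (y / a) * (ENNReal.ofReal (2 * a / y) * F y) := by
          refine mul_le_mul_left ?_ _
          rw [← ENNReal.ofReal_natCast]
          exact ENNReal.ofReal_le_ofReal (Nat.floor_le (by positivity))
      _ = (ENNReal.ofReal (y / a) * ENNReal.ofReal (2 * a / y)) * F y := by ring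
      _ = 2 * F y := by
          rw [← ENNReal.ofReal_mul (by positivity)]
          have : y / a * (2 * a / y) = 2 := by field_simp
          rw [this, ENNReal.ofReal_ofNat]

set_option maxHeartbeats 1000000 in
lemma key (g : ℝ → ℝ) (hg : Measurable g)
    (hint : ∫⁻ y in Set.Ioi (0:ℝ), ((‖g y‖₊ : ℝ≥0∞)) ^ 2 ≠ ⊤) {a : ℝ} (ha : 0 < a) :
    ∀ᵐ x ∂(volume.restrict (Set.Ioo a (2*a))),
      Tendsto (fun n : ℕ => g (n * x)) atTop (nhds 0) := by
  set F : ℝ → ℝ≥0∞ := fun y => ((‖g y‖₊ : ℝ≥0∞)) ^ 2 with hFdef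
  have hF : Measurable F := (hg.nnnorm.coe_nnreal_ennreal).pow_const 2
  have hc : ∀ n : ℕ, (0:ℝ) < (n:ℝ) + 1 := fun n => by positivity
  have hstep : ∀ n : ℕ, ∫⁻ x in Set.Ioo a (2*a), F (((n:ℝ)+1) * x)
      = ∫⁻ y, ENNReal.ofReal (((n:ℝ)+1))⁻¹ *
          (Set.Ioo (((n:ℝ)+1) * a) (((n:ℝ)+1) * (2*a))).indicator F y := by
    intro n
    have hpre : ((((n:ℝ)+1)) * ·) ⁻¹' Set.Ioo (((n:ℝ)+1) * a) (((n:ℝ)+1) * (2*a))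
        = Set.Ioo a (2*a) := by
      rw [Set.preimage_const_mul_Ioo₀ _ _ (hc n),
        mul_div_cancel_left₀ _ (hc n).ne', mul_div_cancel_left₀ _ (hc n).ne']
    calc ∫⁻ x in Set.Ioo a (2*a), F (((n:ℝ)+1) * x)
        = ∫⁻ x, (Set.Ioo a (2*a)).indicator (fun x => F (((n:ℝ)+1) * x)) x :=
          (lintegral_indicator measurableSet_Ioo _).symm
      _ = ∫⁻ x, (Set.Ioo (((n:ℝ)+1) * a) (((n:ℝ)+1) * (2*a))).indicator F (((n:ℝ)+1) * x) := by
          rw [← hpre]; rfl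
      _ = ENNReal.ofReal (((n:ℝ)+1))⁻¹ *
            ∫⁻ y, (Set.Ioo (((n:ℝ)+1) * a) (((n:ℝ)+1) * (2*a))).indicator F y :=
          cov _ (hF.indicator measurableSet_Ioo) (hc n)
      _ = ∫⁻ y, ENNReal.ofReal (((n:ℝ)+1))⁻¹ *
            (Set.Ioo (((n:ℝ)+1) * a) (((n:ℝ)+1) * (2*a))).indicator F y :=
          (lintegral_const_mul' _ _ ENNReal.ofReal_ne_top).symm
  have hptwise : ∀ y : ℝ, ∑' n : ℕ, ENNReal.ofReal (((n:ℝ) + 1))⁻¹ *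
      (Set.Ioo (((n:ℝ) + 1) * a) (((n:ℝ) + 1) * (2 * a))).indicator F y
      ≤ 2 * (Set.Ioi (0:ℝ)).indicator F y := fun y => pointwise_bound F ha y
  have hmeas : ∀ n : ℕ, Measurable (fun x => F (((n:ℝ)+1) * x)) :=
    fun n => hF.comp (measurable_const_mul _)
  have hmeas2 : ∀ n : ℕ, Measurable (fun y => ENNReal.ofReal (((n:ℝ)+1))⁻¹ *
      (Set.Ioo (((n:ℝ)+1) * a) (((n:ℝ)+1) * (2*a))).indicator F y) :=
    fun n => (hF.indicator measurableSet_Ioo).const_mul _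
  have hmain : ∫⁻ x in Set.Ioo a (2*a), ∑' n : ℕ, F (((n:ℝ)+1) * x) ≠ ⊤ := by
    have e1 : ∫⁻ x in Set.Ioo a (2*a), ∑' n : ℕ, F (((n:ℝ)+1) * x)
        = ∑' n : ℕ, ∫⁻ x in Set.Ioo a (2*a), F (((n:ℝ)+1) * x) :=
      lintegral_tsum (fun n => (hmeas n).aemeasurable)
    have e2 : ∑' n : ℕ, ∫⁻ x in Set.Ioo a (2*a), F (((n:ℝ)+1) * x)
        = ∫⁻ y, ∑' n : ℕ, ENNReal.ofReal (((n:ℝ)+1))⁻¹ *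
            (Set.Ioo (((n:ℝ)+1) * a) (((n:ℝ)+1) * (2*a))).indicator F y := by
      exact (tsum_congr hstep).trans (lintegral_tsum (fun n => (hmeas2 n).aemeasurable)).symm
    rw [e1, e2]
    have e3 : ∫⁻ y, ∑' n : ℕ, ENNReal.ofReal (((n:ℝ)+1))⁻¹ *
          (Set.Ioo (((n:ℝ)+1) * a) (((n:ℝ)+1) * (2*a))).indicator F y
        ≤ ∫⁻ y, 2 * (Set.Ioi (0:ℝ)).indicator F y := lintegral_mono hptwise
    have e4 : ∫⁻ y, 2 * (Set.Ioi (0:ℝ)).indicator F y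
        = 2 * ∫⁻ y in Set.Ioi (0:ℝ), F y := by
      rw [lintegral_const_mul' _ _ (by norm_num), lintegral_indicator measurableSet_Ioi]
    exact ne_top_of_le_ne_top (by rw [e4] at e3 ⊢; exact ENNReal.mul_ne_top (by norm_num) hint) e3
  have hmeassum : Measurable (fun x : ℝ => ∑' n : ℕ, F (((n:ℝ)+1) * x)) :=
    Measurable.ennreal_tsum hmeas
  have hae := ae_lt_top hmeassum hmain
  filter_upwards [hae] with x hx
  have hsum : Summable (fun n : ℕ => (‖g (((n:ℝ)+1) * x)‖₊)^2) := by
    rw [← ENNReal.tsum_coe_ne_top_iff_summable]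
    simpa [hFdef, ENNReal.coe_pow] using hx.ne
  have hsumR : Summable (fun n : ℕ => ‖g (((n:ℝ)+1) * x)‖^2) := by
    have := NNReal.summable_coe.mpr hsum
    simpa [NNReal.coe_pow] using this
  have h2 : Tendsto (fun n : ℕ => ‖g (((n:ℝ)+1) * x)‖^2) atTop (nhds 0) :=
    hsumR.tendsto_atTop_zero
  have h3 : Tendsto (fun n : ℕ => |g (((n:ℝ)+1) * x)|) atTop (nhds 0) := by
    have := (Real.continuous_sqrt.tendsto 0).comp h2
    simpa [Function.comp_def, Real.sqrt_sq_eq_abs, abs_norm, Real.norm_eq_abs] using this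
  have h4 : Tendsto (fun n : ℕ => g (((n:ℝ)+1) * x)) atTop (nhds 0) :=
    (tendsto_zero_iff_abs_tendsto_zero _).mpr h3
  have h5 : Tendsto (fun n : ℕ => g (((n+1 : ℕ):ℝ) * x)) atTop (nhds 0) := by
    simpa [Nat.cast_add, Nat.cast_one] using h4
  exact (tendsto_add_atTop_iff_nat 1).mp h5

theorem l2_almost_asymptotic (f : ℝ → ℝ)
    (hf : MemLp f 2 (volume.restrict (Set.Ioi (0:ℝ)))) :
    ∀ᵐ x ∂(volume.restrict (Set.Ioi (0:ℝ))),
      Tendsto (fun n : ℕ => f (n * x)) atTop (nhds 0) := by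
  set g : ℝ → ℝ := hf.aestronglyMeasurable.mk f with hgdef
  have hg_sm : StronglyMeasurable g := hf.aestronglyMeasurable.stronglyMeasurable_mk
  have hfg : f =ᵐ[volume.restrict (Set.Ioi (0:ℝ))] g := hf.aestronglyMeasurable.ae_eq_mk
  have hg : Measurable g := hg_sm.measurable
  have hgL2 : MemLp g 2 (volume.restrict (Set.Ioi (0:ℝ))) := hf.ae_eq hfg
  have hint : ∫⁻ y in Set.Ioi (0:ℝ), ((‖g y‖₊ : ℝ≥0∞)) ^ 2 ≠ ⊤ := by
    have h := lintegral_rpow_enorm_lt_top_of_eLpNorm_lt_top (f := g)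
      (p := 2) (by norm_num) (by norm_num) hgL2.2
    have h2 : (2 : ℝ≥0∞).toReal = (2:ℝ) := by norm_num
    rw [h2] at h
    simpa [ENNReal.rpow_two, enorm_eq_nnnorm] using h.ne
  -- transfer ae equality along scaling maps
  have hE : ∀ᵐ x : ℝ, x ∈ Set.Ioi (0:ℝ) → f x = g x :=
    (ae_restrict_iff' measurableSet_Ioi).mp hfg
  have hEn : ∀ m : ℕ, ∀ᵐ x : ℝ, (((m:ℝ)+1) * x ∈ Set.Ioi (0:ℝ) →
      f (((m:ℝ)+1) * x) = g (((m:ℝ)+1) * x)) := by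
    intro m
    set B : Set ℝ := {x | ¬ (x ∈ Set.Ioi (0:ℝ) → f x = g x)} with hBdef
    have hB : volume B = 0 := ae_iff.mp hE
    obtain ⟨B', hBB', hB'meas, hB'0⟩ := exists_measurable_superset_of_null hB
    have hc : (0:ℝ) < (m:ℝ)+1 := by positivity
    have hpre : volume ((fun x : ℝ => ((m:ℝ)+1) * x) ⁻¹' B') = 0 := by
      have := Measure.map_apply (measurable_const_mul ((m:ℝ)+1)) hB'meas
        (μ := (volume : Measure ℝ))
      rw [Real.map_volume_mul_left hc.ne'] at this
      simp only [Measure.smul_apply, smul_eq_mul] at this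
      rw [← this, hB'0, mul_zero]
    rw [ae_iff]
    refine measure_mono_null ?_ hpre
    intro x hx
    exact hBB' (show ((m:ℝ)+1) * x ∈ B from hx)
  have hEall : ∀ᵐ x : ℝ, ∀ m : ℕ, (((m:ℝ)+1) * x ∈ Set.Ioi (0:ℝ) →
      f (((m:ℝ)+1) * x) = g (((m:ℝ)+1) * x)) := ae_all_iff.mpr hEn
  have hcount : ∀ᵐ x : ℝ, x ∉ Set.range (fun k : ℤ => (2:ℝ)^k) := by
    have h0 : volume (Set.range (fun k : ℤ => (2:ℝ)^k)) = 0 :=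
      (Set.countable_range _).measure_zero _
    exact measure_eq_zero_iff_ae_notMem.mp h0
  have hIoo : ∀ k : ℤ, ∀ᵐ x : ℝ, x ∈ Set.Ioo ((2:ℝ)^k) (2*(2:ℝ)^k) →
      Tendsto (fun n : ℕ => g (n * x)) atTop (nhds 0) := fun k =>
    (ae_restrict_iff' measurableSet_Ioo).mp (key g hg hint (zpow_pos (by norm_num) k))
  rw [ae_restrict_iff' measurableSet_Ioi]
  filter_upwards [hEall, hcount, ae_all_iff.mpr hIoo] with x hfgx hnr hIoox hx
  obtain ⟨k, hk1, hk2⟩ := exists_mem_Ico_zpow (y := (2:ℝ)) hx one_lt_two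
  have hk1' : (2:ℝ)^k < x := lt_of_le_of_ne hk1 (fun h => hnr ⟨k, h⟩)
  have hk2' : x < 2*(2:ℝ)^k := by
    rw [zpow_add_one₀ (two_ne_zero)] at hk2; linarith
  have hgt := hIoox k ⟨hk1', hk2'⟩
  refine hgt.congr' ?_
  filter_upwards [eventually_ge_atTop 1] with n hn
  obtain ⟨m, rfl⟩ := Nat.exists_eq_add_of_le hn
  have hcast : ((1+m : ℕ) : ℝ) = (m:ℝ)+1 := by push_cast; ring
  rw [hcast]
  exact (hfgx m (by simp only [Set.mem_Ioi] at hx ⊢; positivity)).symm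
end

section
/- Let π(α) = (⟨α,α⟩ - κ²)/(ε κ²) for α ∈ ℝ^k with κ, ε > 0, and define Proj(α₁, α₂) = α₂ if π(α₁) ≤ 0 or ⟨∇π(α₁), α₂⟩ ≤ 0, and otherwise Proj(α₁, α₂) = α₂ - (∇π(α₁)/‖∇π(α₁)‖)·⟨∇π(α₁)/‖∇π(α₁)‖, α₂⟩·π(α₁). Then for every α* with π(α*) ≤ 0 and all α₁, α₂ ∈ ℝ^k, one has ⟨α₁ - α*, Proj(α₁, α₂) - α₂⟩ ≤ 0. -/
open scoped RealInnerProductSpace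
open scoped Classical

noncomputable def piFn (κ ε : ℝ) {k : ℕ} (α : EuclideanSpace ℝ (Fin k)) : ℝ :=
  (⟪α, α⟫ - κ ^ 2) / (ε * κ ^ 2)

noncomputable def gradPi (κ ε : ℝ) {k : ℕ} (α : EuclideanSpace ℝ (Fin k)) :
    EuclideanSpace ℝ (Fin k) :=
  (2 / (ε * κ ^ 2)) • α

noncomputable def projOp (κ ε : ℝ) {k : ℕ} (α₁ α₂ : EuclideanSpace ℝ (Fin k)) :
    EuclideanSpace ℝ (Fin k) :=
  if piFn κ ε α₁ ≤ 0 ∨ ⟪gradPi κ ε α₁, α₂⟫ ≤ 0 then α₂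
  else α₂ - (piFn κ ε α₁ * (⟪gradPi κ ε α₁, α₂⟫ / ‖gradPi κ ε α₁‖ ^ 2)) • gradPi κ ε α₁

theorem proj_convexity {k : ℕ} (κ ε : ℝ) (hκ : 0 < κ) (hε : 0 < ε)
    (αstar : EuclideanSpace ℝ (Fin k)) (hstar : piFn κ ε αstar ≤ 0)
    (α₁ α₂ : EuclideanSpace ℝ (Fin k)) :
    ⟪α₁ - αstar, projOp κ ε α₁ α₂ - α₂⟫ ≤ 0 := by
  unfold projOp
  by_cases h : piFn κ ε α₁ ≤ 0 ∨ ⟪gradPi κ ε α₁, α₂⟫ ≤ 0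
  · rw [if_pos h]; simp
  · push_neg at h
    obtain ⟨h1, h2⟩ := h
    rw [if_neg (by push_neg; exact ⟨h1, h2⟩)]
    have hden : (0:ℝ) < ε * κ ^ 2 := by positivity
    -- ‖α₁‖ > κ
    have hα1 : κ ^ 2 < ⟪α₁, α₁⟫ := by
      have h1' := h1
      unfold piFn at h1'
      by_contra hle
      push_neg at hle
      have : (⟪α₁, α₁⟫ - κ ^ 2) / (ε * κ ^ 2) ≤ 0 :=
        div_nonpos_iff.mpr (Or.inr ⟨by linarith, hden.le⟩)
      linarith
    have hstar' : ⟪αstar, αstar⟫ ≤ κ ^ 2 := by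
      unfold piFn at hstar
      rcases div_nonpos_iff.mp hstar with ⟨_, h⟩ | ⟨h, _⟩
      · linarith
      · linarith
    have hα1ne : α₁ ≠ 0 := by
      intro h0
      rw [h0, inner_zero_left] at hα1
      nlinarith
    have hgradne : gradPi κ ε α₁ ≠ 0 :=
      smul_ne_zero (by positivity : (0:ℝ) < 2 / (ε * κ ^ 2)).ne' hα1ne
    set c := piFn κ ε α₁ * (⟪gradPi κ ε α₁, α₂⟫ / ‖gradPi κ ε α₁‖ ^ 2) with hc
    have hcpos : 0 < c := by
      apply mul_pos h1
      apply div_pos h2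
      exact pow_pos (norm_pos_iff.mpr hgradne) 2
    rw [sub_sub_cancel_left, inner_neg_right, inner_smul_right]
    -- ⟪α₁ - αstar, gradPi κ ε α₁⟫ ≥ 0
    have key : 0 ≤ ⟪α₁ - αstar, gradPi κ ε α₁⟫ := by
      unfold gradPi
      rw [inner_smul_right, inner_sub_left]
      have hcs : ⟪αstar, α₁⟫ ≤ ‖αstar‖ * ‖α₁‖ := real_inner_le_norm _ _
      have hns : ‖αstar‖ ≤ κ := by
        have := real_inner_self_eq_norm_sq αstar
        nlinarith [norm_nonneg αstar]
      have hn1 : κ ≤ ‖α₁‖ := by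
        have := real_inner_self_eq_norm_sq α₁
        nlinarith [norm_nonneg α₁]
      have : ⟪αstar, α₁⟫ ≤ ⟪α₁, α₁⟫ := by
        rw [real_inner_self_eq_norm_sq]
        nlinarith [norm_nonneg α₁, hκ.le]
      have hcomm : ⟪α₁, αstar⟫ = ⟪αstar, α₁⟫ := real_inner_comm _ _
      have h2div : 0 ≤ 2 / (ε * κ ^ 2) := by positivity
      nlinarith [mul_nonneg h2div (sub_nonneg.mpr this)]
    nlinarith
end

section
/- With π and Proj as defined for the projection operator, any solution α₁ : ℝ≥0 → ℝ^k of the ODE α₁'(t) = Proj(α₁(t), α₂(t)) (for continuous α₂) with initial condition α₁(0) ∈ Ω₁ = {α : π(α) ≤ 1} satisfies α₁(t) ∈ Ω₁ for all t ≥ 0. -/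
open scoped RealInnerProductSpace
open scoped Classical

/-- Key dissipativity: on or outside the boundary, the projected field points inward. -/
lemma key_inner_nonpos {k : ℕ} (κ ε : ℝ) (hκ : 0 < κ) (hε : 0 < ε)
    (α β : EuclideanSpace ℝ (Fin k)) (h : (1 + ε) * κ ^ 2 ≤ ⟪α, α⟫) :
    ⟪α, projOp κ ε α β⟫ ≤ 0 := by
  have hκ2 : (0:ℝ) < κ ^ 2 := by positivity
  have hεκ : (0:ℝ) < ε * κ ^ 2 := by positivity
  have ha : (0:ℝ) < ⟪α, α⟫ := lt_of_lt_of_le (by nlinarith) h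
  have hpi : (1:ℝ) ≤ piFn κ ε α := by
    rw [piFn, le_div_iff₀ hεκ]; nlinarith
  set lam : ℝ := 2 / (ε * κ ^ 2) with hlam
  have hlampos : 0 < lam := by positivity
  rw [projOp]
  split_ifs with hcase
  · rcases hcase with hc | hc
    · linarith
    · rw [gradPi, real_inner_smul_left] at hc
      nlinarith
  · push_neg at hcase
    obtain ⟨-, hc⟩ := hcase
    have hgb : ⟪gradPi κ ε α, β⟫ = lam * ⟪α, β⟫ := by
      rw [gradPi, real_inner_smul_left]
    have hb : 0 < ⟪α, β⟫ := by nlinarith [hgb ▸ hc]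
    have hnorm : ‖gradPi κ ε α‖ ^ 2 = lam ^ 2 * ⟪α, α⟫ := by
      rw [← real_inner_self_eq_norm_sq, gradPi, real_inner_smul_left, real_inner_smul_right]
      ring
    have hag : ⟪α, gradPi κ ε α⟫ = lam * ⟪α, α⟫ := by
      rw [gradPi, real_inner_smul_right]
    rw [inner_sub_right, real_inner_smul_right, hgb, hnorm, hag]
    set A : ℝ := ⟪α, α⟫ with hA
    set B : ℝ := ⟪α, β⟫ with hB
    have hane : A ≠ 0 := ne_of_gt ha
    have hlne : lam ≠ 0 := ne_of_gt hlampos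
    have : piFn κ ε α * (lam * B / (lam ^ 2 * A)) * (lam * A)
        = piFn κ ε α * B := by
      field_simp
    rw [this]
    nlinarith

theorem proj_forward_invariance {k : ℕ} (κ ε : ℝ) (hκ : 0 < κ) (hε : 0 < ε)
    (α₁ α₂ : ℝ → EuclideanSpace ℝ (Fin k)) (hα₂ : Continuous α₂)
    (hode : ∀ t, 0 ≤ t → HasDerivAt α₁ (projOp κ ε (α₁ t) (α₂ t)) t)
    (h0 : piFn κ ε (α₁ 0) ≤ 1) :
    ∀ t, 0 ≤ t → piFn κ ε (α₁ t) ≤ 1 := by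
  have hκ2 : (0:ℝ) < κ ^ 2 := by positivity
  have hεκ : (0:ℝ) < ε * κ ^ 2 := by positivity
  set c : ℝ := (1 + ε) * κ ^ 2 with hc
  set f : ℝ → ℝ := fun t => ⟪α₁ t, α₁ t⟫ with hf
  have hpi_iff : ∀ t, piFn κ ε (α₁ t) ≤ 1 ↔ f t ≤ c := by
    intro t
    rw [piFn, div_le_one hεκ]
    constructor <;> intro h <;> [skip; skip] <;> simp only [hf, hc] at * <;> nlinarith
  have hfderiv : ∀ t, 0 ≤ t →
      HasDerivAt f (2 * ⟪α₁ t, projOp κ ε (α₁ t) (α₂ t)⟫) t := by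
    intro t ht
    have := (hode t ht).inner ℝ (hode t ht)
    refine this.congr_deriv ?_
    rw [real_inner_comm]; ring
  have hcont : ∀ t, 0 ≤ t → ContinuousAt f t := fun t ht =>
    (hfderiv t ht).continuousAt
  intro T hT
  by_contra hT'
  rw [hpi_iff] at hT'
  push_neg at hT'
  have h0' : f 0 ≤ c := (hpi_iff 0).mp h0
  have hT0 : 0 < T := by
    rcases eq_or_lt_of_le hT with h | h
    · exact absurd h0' (by rw [h]; exact not_le.mpr hT')
    · exact h
  set S : Set ℝ := {t | t ∈ Set.Icc 0 T ∧ f t ≤ c} with hS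
  have hS0 : (0:ℝ) ∈ S := ⟨⟨le_refl 0, hT⟩, h0'⟩
  have hSne : S.Nonempty := ⟨0, hS0⟩
  have hSbdd : BddAbove S := ⟨T, fun x hx => hx.1.2⟩
  have hfContOn : ContinuousOn f (Set.Icc 0 T) := fun x hx =>
    (hcont x hx.1).continuousWithinAt
  have hSclosed : IsClosed S := by
    have : S = Set.Icc 0 T ∩ f ⁻¹' Set.Iic c := by
      ext x; simp [hS, Set.mem_Icc, and_assoc]
    rw [this]
    exact hfContOn.preimage_isClosed_of_isClosed isClosed_Icc isClosed_Iic
  set s : ℝ := sSup S with hsdef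
  have hsS : s ∈ S := hSclosed.csSup_mem hSne hSbdd
  have hsT : s < T := lt_of_le_of_ne hsS.1.2 (fun h => absurd (h ▸ hsS.2) (not_le.mpr hT'))
  have hs0 : 0 ≤ s := le_csSup hSbdd hS0
  -- on (s, T], f > c
  have hgt : ∀ t, s < t → t ≤ T → c < f t := by
    intro t hst htT
    by_contra h
    push_neg at h
    exact absurd (le_csSup hSbdd ⟨⟨le_trans hs0 hst.le, htT⟩, h⟩) (not_le.mpr hst)
  have hanti : AntitoneOn f (Set.Icc s T) := by
    apply antitoneOn_of_deriv_nonpos (convex_Icc s T)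
    · exact hfContOn.mono (Set.Icc_subset_Icc hs0 le_rfl)
    · intro x hx
      rw [interior_Icc] at hx
      exact ((hfderiv x (le_trans hs0 hx.1.le)).differentiableAt).differentiableWithinAt
    · intro x hx
      rw [interior_Icc] at hx
      have hd := hfderiv x (le_trans hs0 hx.1.le)
      rw [hd.deriv]
      have := key_inner_nonpos κ ε hκ hε (α₁ x) (α₂ x) (le_of_lt (hgt x hx.1 hx.2.le))
      linarith
  have := hanti (Set.left_mem_Icc.mpr hsT.le) (Set.right_mem_Icc.mpr hsT.le) hsT.le
  exact absurd (le_trans this hsS.2) (not_le.mpr hT')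
end

section
/- Let ỹ : ℝ≥0 → ℝ be measurable with ∫₀^∞ ỹ(s)² ds < ∞. Then ỹ converges to 0 almost asymptotically: for almost every x ≥ 0, ỹ(n x) → 0 as n → ∞. -/
open MeasureTheory Filter ENNReal

open Set in
/-- Change of variables `t = c * x` for lintegrals over sets. -/
lemma aux_scale (g : ℝ → ℝ≥0∞) (hg : Measurable g) {c : ℝ} (hc : 0 < c)
    {T : Set ℝ} (hT : MeasurableSet T) :
    ∫⁻ x in (fun x => c * x) ⁻¹' T, g (c * x) = ENNReal.ofReal c⁻¹ * ∫⁻ t in T, g t := by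
  calc ∫⁻ x in (fun x => c * x) ⁻¹' T, g (c * x)
      = ∫⁻ t, g t ∂((volume.restrict ((fun x => c * x) ⁻¹' T)).map (fun x => c * x)) :=
        (lintegral_map hg (measurable_const_mul c)).symm
    _ = ∫⁻ t in T, g t ∂(Measure.map (fun x => c * x) volume) := by
        rw [Measure.restrict_map (measurable_const_mul c) hT]
    _ = ENNReal.ofReal c⁻¹ * ∫⁻ t in T, g t := by
        rw [show (fun x => c * x) = (c * ·) from rfl, Real.map_volume_mul_left hc.ne',
          Measure.restrict_smul, lintegral_smul_measure, abs_of_pos (inv_pos.2 hc), smul_eq_mul]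

open Set in
/-- The key arithmetic bound: the harmonic-like sum over the indicators is at most 1. -/
lemma aux_tsum_le_one {a : ℝ} (ha : 0 < a) (t : ℝ) :
    ∑' n : ℕ, (if t ∈ Set.Ioc (((n : ℝ) + 1) * a) (2 * (((n : ℝ) + 1) * a))
      then (((n : ℕ) + 1 : ℕ) : ℝ≥0∞)⁻¹ else 0) ≤ 1 := by
  by_cases hta : a < t
  · set m : ℕ := ⌈t / (2 * a)⌉₊ with hm
    have hm1 : 1 ≤ m := by
      have : (0 : ℝ) < t / (2 * a) := div_pos (lt_trans ha hta) (by linarith)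
      exact Nat.one_le_iff_ne_zero.mpr (by positivity)
    have hsupport : ∀ n : ℕ, n ∉ Finset.Ico (m - 1) (2 * m - 1) →
        (if t ∈ Set.Ioc (((n : ℝ) + 1) * a) (2 * (((n : ℝ) + 1) * a))
          then (((n : ℕ) + 1 : ℕ) : ℝ≥0∞)⁻¹ else 0) = 0 := by
      intro n hn
      rw [if_neg]
      intro ⟨h1, h2⟩
      apply hn
      have h2a : (0:ℝ) < 2 * a := by linarith
      have hmle : m ≤ n + 1 := by
        apply Nat.ceil_le.mpr
        rw [div_le_iff₀ h2a]
        push_cast; nlinarith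
      have hub : (n : ℝ) + 1 < 2 * m := by
        have hc : t / (2 * a) ≤ (m : ℝ) := Nat.le_ceil _
        rw [div_le_iff₀ h2a] at hc
        nlinarith
      have hub' : n + 1 < 2 * m := by exact_mod_cast (by push_cast; exact hub : ((n:ℝ) + 1) < ((2*m : ℕ) : ℝ))
      exact Finset.mem_Ico.mpr ⟨by omega, by omega⟩
    rw [tsum_eq_sum hsupport]
    have hcard : (Finset.Ico (m - 1) (2 * m - 1)).card = m := by
      rw [Nat.card_Ico]; omega
    calc (∑ n ∈ Finset.Ico (m - 1) (2 * m - 1),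
            if t ∈ Set.Ioc (((n : ℝ) + 1) * a) (2 * (((n : ℝ) + 1) * a))
              then (((n : ℕ) + 1 : ℕ) : ℝ≥0∞)⁻¹ else 0)
        ≤ ∑ _n ∈ Finset.Ico (m - 1) (2 * m - 1), ((m : ℝ≥0∞))⁻¹ := by
          apply Finset.sum_le_sum
          intro n hn
          split_ifs with h
          · rcases h with ⟨h1, h2⟩
            have h2a : (0:ℝ) < 2 * a := by linarith
            have hmle : m ≤ n + 1 := by
              apply Nat.ceil_le.mpr
              rw [div_le_iff₀ h2a]
              push_cast; nlinarith
            exact ENNReal.inv_le_inv.mpr (by exact_mod_cast hmle)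
          · exact zero_le
      _ = 1 := by
          rw [Finset.sum_const, hcard, nsmul_eq_mul]
          exact ENNReal.mul_inv_cancel (Nat.cast_ne_zero.mpr (by omega)) (ENNReal.natCast_ne_top m)
  · have : ∀ n : ℕ, (if t ∈ Set.Ioc (((n : ℝ) + 1) * a) (2 * (((n : ℝ) + 1) * a))
        then (((n : ℕ) + 1 : ℕ) : ℝ≥0∞)⁻¹ else 0) = 0 := by
      intro n
      rw [if_neg]
      intro ⟨h1, _⟩
      apply hta
      have : a ≤ ((n : ℝ) + 1) * a := le_mul_of_one_le_left ha.le (le_add_of_nonneg_left n.cast_nonneg)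
      linarith
    rw [tsum_eq_sum (s := ∅) (fun n _ => this n)]
    simp

open Set in
/-- The key lemma on a dyadic interval. -/
lemma aux_key (ytil : ℝ → ℝ) (hmeas : Measurable ytil)
    (hfin : ∫⁻ t in Set.Ioi (0:ℝ), ENNReal.ofReal ((ytil t) ^ 2) ≠ ∞)
    {a : ℝ} (ha : 0 < a) :
    ∀ᵐ x ∂(volume.restrict (Set.Ioc a (2 * a))),
      Tendsto (fun n : ℕ => ytil (n * x)) atTop (nhds 0) := by
  set g : ℝ → ℝ≥0∞ := fun t => ENNReal.ofReal ((ytil t) ^ 2) with hgdef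
  have hg : Measurable g := (hmeas.pow_const 2).ennreal_ofReal
  -- the double integral is finite
  have hI : ∫⁻ x in Set.Ioc a (2 * a), ∑' n : ℕ, g (((n : ℝ) + 1) * x) ≠ ∞ := by
    have hswap : ∫⁻ x in Set.Ioc a (2 * a), ∑' n : ℕ, g (((n : ℝ) + 1) * x) =
        ∑' n : ℕ, ∫⁻ x in Set.Ioc a (2 * a), g (((n : ℝ) + 1) * x) :=
      lintegral_tsum fun n => (hg.comp (measurable_const_mul _)).aemeasurable
    rw [hswap]
    have hterm : ∀ n : ℕ, ∫⁻ x in Set.Ioc a (2 * a), g (((n : ℝ) + 1) * x) =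
        ∫⁻ t in Set.Ioi (0:ℝ), ENNReal.ofReal (((n : ℝ) + 1))⁻¹ *
          (Set.Ioc (((n : ℝ) + 1) * a) (2 * (((n : ℝ) + 1) * a))).indicator g t := by
      intro n
      have hc : (0:ℝ) < (n : ℝ) + 1 := by positivity
      have hpre : Set.Ioc a (2 * a) =
          (fun x => ((n : ℝ) + 1) * x) ⁻¹' Set.Ioc (((n : ℝ) + 1) * a) (2 * (((n : ℝ) + 1) * a)) := by
        have h2 : 2 * (((n : ℝ) + 1) * a) / ((n : ℝ) + 1) = 2 * a := by
          field_simp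
        rw [Set.preimage_const_mul_Ioc₀ _ _ hc, mul_div_cancel_left₀ _ hc.ne', h2]
      rw [hpre, aux_scale g hg hc measurableSet_Ioc]
      rw [lintegral_const_mul _ (hg.indicator measurableSet_Ioc)]
      congr 1
      have hsub : Set.Ioc (((n : ℝ) + 1) * a) (2 * (((n : ℝ) + 1) * a)) ⊆ Set.Ioi (0:ℝ) := by
        intro t ⟨h1, _⟩
        have : (0:ℝ) < ((n : ℝ) + 1) * a := by positivity
        exact lt_trans this h1
      rw [lintegral_indicator measurableSet_Ioc, Measure.restrict_restrict measurableSet_Ioc,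
        Set.inter_eq_left.mpr hsub]
    simp_rw [hterm]
    rw [← lintegral_tsum (f := fun (n : ℕ) (t : ℝ) => ENNReal.ofReal (((n : ℝ) + 1))⁻¹ *
        (Set.Ioc (((n : ℝ) + 1) * a) (2 * (((n : ℝ) + 1) * a))).indicator g t) (fun n => (measurable_const.mul
      (hg.indicator measurableSet_Ioc)).aemeasurable)]
    have hptwise : ∀ t : ℝ,
        (∑' n : ℕ, ENNReal.ofReal (((n : ℝ) + 1))⁻¹ *
          (Set.Ioc (((n : ℝ) + 1) * a) (2 * (((n : ℝ) + 1) * a))).indicator g t) ≤ g t := by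
      intro t
      have hle : ∀ n : ℕ, ENNReal.ofReal (((n : ℝ) + 1))⁻¹ *
          (Set.Ioc (((n : ℝ) + 1) * a) (2 * (((n : ℝ) + 1) * a))).indicator g t ≤
          g t * (if t ∈ Set.Ioc (((n : ℝ) + 1) * a) (2 * (((n : ℝ) + 1) * a))
            then (((n : ℕ) + 1 : ℕ) : ℝ≥0∞)⁻¹ else 0) := by
        intro n
        rw [Set.indicator_apply]
        split_ifs with h
        · rw [mul_comm]
          apply mul_le_mul_right
          rw [← ENNReal.ofReal_natCast, ← ENNReal.ofReal_inv_of_pos (by exact_mod_cast Nat.succ_pos n)]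
          apply ENNReal.ofReal_le_ofReal
          push_cast
          exact le_rfl
        · simp
      calc (∑' n : ℕ, ENNReal.ofReal (((n : ℝ) + 1))⁻¹ *
            (Set.Ioc (((n : ℝ) + 1) * a) (2 * (((n : ℝ) + 1) * a))).indicator g t)
          ≤ ∑' n : ℕ, g t * (if t ∈ Set.Ioc (((n : ℝ) + 1) * a) (2 * (((n : ℝ) + 1) * a))
              then (((n : ℕ) + 1 : ℕ) : ℝ≥0∞)⁻¹ else 0) := ENNReal.tsum_le_tsum hle
        _ = g t * ∑' n : ℕ, (if t ∈ Set.Ioc (((n : ℝ) + 1) * a) (2 * (((n : ℝ) + 1) * a))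
              then (((n : ℕ) + 1 : ℕ) : ℝ≥0∞)⁻¹ else 0) := ENNReal.tsum_mul_left
        _ ≤ g t * 1 := mul_le_mul_right (aux_tsum_le_one ha t) _
        _ = g t := mul_one _
    exact ne_top_of_le_ne_top hfin (lintegral_mono hptwise)
  -- a.e. finiteness of the tsum
  have hae : ∀ᵐ x ∂(volume.restrict (Set.Ioc a (2 * a))),
      (∑' n : ℕ, g (((n : ℝ) + 1) * x)) < ∞ :=
    ae_lt_top (Measurable.ennreal_tsum fun n => hg.comp (measurable_const_mul _)) hI
  filter_upwards [hae] with x hx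
  have htendsto : Tendsto (fun n : ℕ => g (((n : ℝ) + 1) * x)) atTop (nhds 0) :=
    ENNReal.tendsto_atTop_zero_of_tsum_ne_top hx.ne
  have hsq : Tendsto (fun n : ℕ => (ytil (((n : ℝ) + 1) * x)) ^ 2) atTop (nhds 0) := by
    have := (ENNReal.tendsto_toReal (by simp : (0:ℝ≥0∞) ≠ ∞)).comp htendsto
    simp only [Function.comp_def, hgdef, ENNReal.toReal_ofReal (sq_nonneg _),
      ENNReal.toReal_zero] at this
    exact this
  have habs : Tendsto (fun n : ℕ => |ytil (((n : ℝ) + 1) * x)|) atTop (nhds 0) := by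
    have := (Real.continuous_sqrt.tendsto 0).comp hsq
    simpa [Function.comp_def, Real.sqrt_sq_eq_abs] using this
  have hshift : Tendsto (fun n : ℕ => ytil (((n : ℝ) + 1) * x)) atTop (nhds 0) := by
    rw [← abs_zero] at habs
    exact tendsto_zero_iff_abs_tendsto_zero _ |>.mpr (by simpa [Function.comp_def] using habs)
  have : Tendsto (fun n : ℕ => ytil (((n + 1 : ℕ) : ℝ) * x)) atTop (nhds 0) := by
    convert hshift using 2 with n
    push_cast; ring
  exact (tendsto_add_atTop_iff_nat 1).mp this

theorem l2_integral_almost_asymptotic (ytil : ℝ → ℝ) (hmeas : Measurable ytil)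
    (hL2 : Integrable (fun s => (ytil s) ^ 2) (volume.restrict (Set.Ioi (0:ℝ)))) :
    ∀ᵐ x ∂(volume.restrict (Set.Ioi (0:ℝ))),
      Tendsto (fun n : ℕ => ytil (n * x)) atTop (nhds 0) := by
  have hfin : ∫⁻ t in Set.Ioi (0:ℝ), ENNReal.ofReal ((ytil t) ^ 2) ≠ ∞ :=
    hL2.lintegral_lt_top.ne
  rw [ae_iff, Measure.restrict_apply' measurableSet_Ioi]
  set N : Set ℝ := {x | ¬ Tendsto (fun n : ℕ => ytil (n * x)) atTop (nhds 0)} with hN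
  have hkey : ∀ k : ℤ, volume (N ∩ Set.Ioc ((2:ℝ) ^ k) (2 * 2 ^ k)) = 0 := by
    intro k
    have ha : (0:ℝ) < 2 ^ k := zpow_pos (by norm_num) k
    have := aux_key ytil hmeas hfin ha
    rw [ae_iff, Measure.restrict_apply' measurableSet_Ioc] at this
    exact this
  have hsub : N ∩ Set.Ioi (0:ℝ) ⊆ ⋃ k : ℤ, N ∩ Set.Ioc ((2:ℝ) ^ k) (2 * 2 ^ k) := by
    intro x ⟨hxN, hx0⟩
    obtain ⟨k, hk⟩ := exists_mem_Ioc_zpow (Set.mem_Ioi.mp hx0) (one_lt_two : (1:ℝ) < 2)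
    refine Set.mem_iUnion.mpr ⟨k, hxN, ?_⟩
    rwa [zpow_add_one₀ (two_ne_zero), mul_comm] at hk
  exact measure_mono_null hsub (measure_iUnion_null hkey)
end

section
/- Let H be a real Hilbert space, T(t) a family of operators with ‖T(t)‖ ≤ M e^{-β t} (M ≥ 1, β > 0), and let w(t) = T(t) w₀ + ∫₀ᵗ T(t-s) f(s) ds where ‖f(s)‖ ≤ ν₁ ‖w(s)‖ + ν₂ + δ for all s ≤ τ, with constants ν₁, ν₂, δ ≥ 0. If (M/β) ν₁ < 1 and the small-gain bound (M‖w₀‖ + (M/β)(ν₂ + δ)) / (1 - (M/β)ν₁) ≤ ρ - ε holds for some ρ > 0, ε > 0, and sup_{s ≤ τ} ‖w(s)‖ is finite, then sup_{s ≤ τ} ‖w(s)‖ ≤ ρ - ε. -/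
open MeasureTheory

theorem small_gain_sup_bound {H : Type*} [NormedAddCommGroup H] [InnerProductSpace ℝ H]
    [CompleteSpace H]
    (T : ℝ → (H →L[ℝ] H)) (M β : ℝ) (hM : 1 ≤ M) (hβ : 0 < β)
    (hT : ∀ t, 0 ≤ t → ‖T t‖ ≤ M * Real.exp (-β * t))
    (w₀ : H) (w f : ℝ → H) (ν₁ ν₂ δ τ ρ ε : ℝ)
    (hν₁ : 0 ≤ ν₁) (hν₂ : 0 ≤ ν₂) (hδ : 0 ≤ δ) (hτ : 0 ≤ τ) (hρ : 0 < ρ) (hε : 0 < ε)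
    (hw : ∀ t, w t = (T t) w₀ + ∫ s in (0:ℝ)..t, (T (t - s)) (f s))
    (hf : ∀ s, 0 ≤ s → s ≤ τ → ‖f s‖ ≤ ν₁ * ‖w s‖ + ν₂ + δ)
    (hgain : (M / β) * ν₁ < 1)
    (hsg : (M * ‖w₀‖ + (M / β) * (ν₂ + δ)) / (1 - (M / β) * ν₁) ≤ ρ - ε)
    (hbdd : BddAbove ((fun s => ‖w s‖) '' Set.Icc 0 τ)) :
    sSup ((fun s => ‖w s‖) '' Set.Icc 0 τ) ≤ ρ - ε := by
  set S := sSup ((fun s => ‖w s‖) '' Set.Icc 0 τ) with hS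
  have hmem : ∀ s, s ∈ Set.Icc (0:ℝ) τ → ‖w s‖ ≤ S := fun s hs =>
    le_csSup hbdd ⟨s, hs, rfl⟩
  have hS0 : 0 ≤ S := le_trans (norm_nonneg _) (hmem 0 ⟨le_refl _, hτ⟩)
  set C := ν₁ * S + ν₂ + δ with hC
  have hC0 : 0 ≤ C := by positivity
  have hM0 : (0:ℝ) < M := lt_of_lt_of_le one_pos hM
  -- key pointwise bound
  have key : ∀ t, t ∈ Set.Icc (0:ℝ) τ → ‖w t‖ ≤ M * ‖w₀‖ + (M / β) * C := by
    intro t ht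
    obtain ⟨ht0, htτ⟩ := ht
    have hTt : ‖(T t) w₀‖ ≤ M * ‖w₀‖ := by
      calc ‖(T t) w₀‖ ≤ ‖T t‖ * ‖w₀‖ := (T t).le_opNorm w₀
        _ ≤ (M * Real.exp (-β * t)) * ‖w₀‖ := by
            exact mul_le_mul_of_nonneg_right (hT t ht0) (norm_nonneg _)
        _ ≤ M * ‖w₀‖ := by
            have h1 : Real.exp (-β * t) ≤ 1 := Real.exp_le_one_iff.2 (by nlinarith)
            nlinarith [mul_nonneg (mul_nonneg hM0.le (norm_nonneg w₀)) (sub_nonneg.2 h1)]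
    have hIntg : IntervalIntegrable (fun s => M * Real.exp (-β * (t - s)) * C)
        volume 0 t := by
      apply Continuous.intervalIntegrable
      fun_prop
    have hbound : ∀ᵐ s ∂(volume.restrict (Set.uIoc (0:ℝ) t)),
        ‖(T (t - s)) (f s)‖ ≤ M * Real.exp (-β * (t - s)) * C := by
      refine ae_restrict_of_forall_mem measurableSet_uIoc ?_
      intro s hsm
      rw [Set.uIoc_of_le ht0] at hsm
      obtain ⟨hs0, hst⟩ := hsm
      have hs0' : 0 ≤ s := le_of_lt hs0
      have hts : 0 ≤ t - s := by linarith
      have hfb : ‖f s‖ ≤ C := by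
        have := hf s hs0' (le_trans hst htτ)
        have hws : ‖w s‖ ≤ S := hmem s ⟨hs0', le_trans hst htτ⟩
        rw [hC]; nlinarith
      calc ‖(T (t - s)) (f s)‖ ≤ ‖T (t - s)‖ * ‖f s‖ := (T (t-s)).le_opNorm _
        _ ≤ (M * Real.exp (-β * (t - s))) * C := by
            apply mul_le_mul (hT _ hts) hfb (norm_nonneg _)
            positivity
    have hint : ‖∫ s in (0:ℝ)..t, (T (t - s)) (f s)‖
        ≤ |∫ s in (0:ℝ)..t, M * Real.exp (-β * (t - s)) * C| :=
      intervalIntegral.norm_integral_le_abs_of_norm_le hbound hIntg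
    -- compute the integral
    have hderiv : ∀ s ∈ Set.uIcc (0:ℝ) t, HasDerivAt
        (fun s => (M * C / β) * Real.exp (-β * (t - s)))
        (M * Real.exp (-β * (t - s)) * C) s := by
      intro s _
      have h1 : HasDerivAt (fun s : ℝ => -β * (t - s)) β s := by
        have : HasDerivAt (fun s : ℝ => t - s) (-1) s :=
          (hasDerivAt_id s).const_sub t |>.congr_deriv (by ring)
        simpa using (this.const_mul (-β)).congr_deriv (by ring)
      have h2 := (h1.exp).const_mul (M * C / β)
      refine h2.congr_deriv ?_
      field_simp
    have hcont : ContinuousOn (fun s => M * Real.exp (-β * (t - s)) * C)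
        (Set.uIcc (0:ℝ) t) := by fun_prop
    have hval : ∫ s in (0:ℝ)..t, M * Real.exp (-β * (t - s)) * C
        = (M * C / β) * Real.exp (-β * (t - t)) - (M * C / β) * Real.exp (-β * (t - 0)) := by
      exact intervalIntegral.integral_eq_sub_of_hasDerivAt hderiv
        (hcont.intervalIntegrable)
    have hval' : ∫ s in (0:ℝ)..t, M * Real.exp (-β * (t - s)) * C
        = (M * C / β) * (1 - Real.exp (-β * t)) := by
      rw [hval]; simp; ring
    have hintle : |∫ s in (0:ℝ)..t, M * Real.exp (-β * (t - s)) * C| ≤ (M / β) * C := by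
      rw [hval', abs_of_nonneg]
      · have h1 : Real.exp (-β * t) ≤ 1 := Real.exp_le_one_iff.2 (by nlinarith)
        have h2 : 0 < Real.exp (-β * t) := Real.exp_pos _
        rw [div_mul_eq_mul_div, div_mul_eq_mul_div, div_le_div_iff₀ hβ hβ] at *
        nlinarith [mul_nonneg (mul_nonneg (mul_nonneg hM0.le hC0) h2.le) hβ.le]
      · have h1 : Real.exp (-β * t) ≤ 1 := Real.exp_le_one_iff.2 (by nlinarith)
        have : 0 ≤ M * C / β := by positivity
        nlinarith
    calc ‖w t‖ = ‖(T t) w₀ + ∫ s in (0:ℝ)..t, (T (t - s)) (f s)‖ := by rw [hw t]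
      _ ≤ ‖(T t) w₀‖ + ‖∫ s in (0:ℝ)..t, (T (t - s)) (f s)‖ := norm_add_le _ _
      _ ≤ M * ‖w₀‖ + (M / β) * C := add_le_add hTt (hint.trans hintle)
  have hSle : S ≤ M * ‖w₀‖ + (M / β) * C := by
    apply csSup_le ((Set.nonempty_Icc.2 hτ).image _)
    rintro x ⟨s, hs, rfl⟩
    exact key s hs
  have hden : 0 < 1 - (M / β) * ν₁ := by linarith
  rw [div_le_iff₀ hden] at hsg
  rw [hC] at hSle
  nlinarith
end
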